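/- Let V be a finite set of boxes with size function w : V → [0,1]^d that admits an orthogonal packing into the unit cube [0,1]^d, and let u_1, …, u_d be dual feasible functions. Then ∑_{b∈V} ∏_{i=1}^d u_i(w_i(b)) ≤ 1. -/

import Mathlib

/-- A function `u : [0,1] → [0,1]` is *dual feasible* if it maps `[0,1]` into `[0,1]`
and for every finite family `x₁, …, xₙ` of numbers in `[0,1]` with `∑ xⱼ ≤ 1`
one has `∑ u (xⱼ) ≤ 1`. -/
def DualFeasible (u : ℝ → ℝ) : Prop :=
  (∀ x ∈ Set.Icc (0 : ℝ) 1, u x ∈ Set.Icc (0 : ℝ) 1) ∧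
  ∀ (n : ℕ) (x : Fin n → ℝ), (∀ j, x j ∈ Set.Icc (0 : ℝ) 1) →
    ∑ j, x j ≤ 1 → ∑ j, u (x j) ≤ 1

/-- `p` is an orthogonal packing of the boxes `(V, w)` into the unit cube `[0,1]^d`:
each box lies inside the cube and distinct boxes have disjoint interiors
(they are separated along some coordinate). -/
def IsOrthogonalPacking {V : Type*} {d : ℕ} (w p : V → Fin d → ℝ) : Prop :=
  (∀ b i, 0 ≤ p b i ∧ p b i + w b i ≤ 1) ∧
  ∀ b c : V, b ≠ c → ∃ i, p b i + w b i ≤ p c i ∨ p c i + w c i ≤ p b i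

namespace TVAux

/-- `b` must be placed before `c` along coordinate `k`. -/
def Pred {V : Type*} {d : ℕ} (w p : V → Fin d → ℝ) (k : Fin d) (idx : V → ℕ)
    (b c : V) : Prop :=
  (∀ i, i ≠ k → ¬(p b i + w b i ≤ p c i ∨ p c i + w c i ≤ p b i)) ∧
  p b k + w b k ≤ p c k ∧
  (¬ (p c k + w c k ≤ p b k) ∨ idx b < idx c)

open Classical in
/-- Iterated chain potential along coordinate `k`. -/
noncomputable def Fit {V : Type*} {d : ℕ} [Fintype V] (w p : V → Fin d → ℝ)
    (k : Fin d) (idx : V → ℕ) (u : ℝ → ℝ) : ℕ → V → ℝ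
  | 0 => fun _ => 0
  | n+1 => fun c =>
      (Finset.univ.filter (fun b => Pred w p k idx b c)).fold max 0
        (fun b => Fit w p k idx u n b + u (w b k))

section FitLemmas

variable {V : Type*} {d : ℕ} [Fintype V] (w p : V → Fin d → ℝ) (k : Fin d)
  (idx : V → ℕ) (u : ℝ → ℝ)

lemma Fit_nonneg : ∀ n c, 0 ≤ Fit w p k idx u n c := by
  intro n c
  cases n with
  | zero => simp [Fit]
  | succ n =>
    simp only [Fit]
    exact (Finset.le_fold_max _).2 (Or.inl le_rfl)

lemma Fit_pred_le {b c : V} (h : Pred w p k idx b c) (n : ℕ) :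
    Fit w p k idx u n b + u (w b k) ≤ Fit w p k idx u (n+1) c := by
  classical
  simp only [Fit]
  exact (Finset.le_fold_max _).2
    (Or.inr ⟨b, Finset.mem_filter.2 ⟨Finset.mem_univ b, h⟩, le_rfl⟩)

lemma Fit_succ_le {n : ℕ} {c : V} {X : ℝ} (h0 : 0 ≤ X)
    (h : ∀ b, Pred w p k idx b c → Fit w p k idx u n b + u (w b k) ≤ X) :
    Fit w p k idx u (n+1) c ≤ X := by
  classical
  simp only [Fit]
  exact (Finset.fold_max_le _).2 ⟨h0, fun b hb => h b (Finset.mem_filter.1 hb).2⟩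

lemma Fit_succ_mono : ∀ n, ∀ c, Fit w p k idx u n c ≤ Fit w p k idx u (n+1) c := by
  classical
  intro n
  induction n with
  | zero => intro c; simpa [Fit] using Fit_nonneg w p k idx u 1 c
  | succ n ih =>
    intro c
    refine Fit_succ_le w p k idx u (Fit_nonneg w p k idx u (n+2) c) ?_
    intro b hbc
    calc Fit w p k idx u n b + u (w b k)
        ≤ Fit w p k idx u (n+1) b + u (w b k) := by
          have := ih b; linarith
      _ ≤ Fit w p k idx u (n+2) c := Fit_pred_le w p k idx u hbc (n+1)

lemma Fit_mono {n m : ℕ} (h : n ≤ m) (c : V) :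
    Fit w p k idx u n c ≤ Fit w p k idx u m c := by
  induction h with
  | refl => exact le_rfl
  | step _ ih => exact le_trans ih (Fit_succ_mono w p k idx u _ _)

lemma fold_max_cases {α : Type*} (s : Finset α) (h : α → ℝ) :
    s.fold max 0 h ≤ 0 ∨ ∃ b ∈ s, s.fold max 0 h ≤ h b := by
  rcases s.eq_empty_or_nonempty with hs | hs
  · left; simp [hs]
  · obtain ⟨b, hb, hmax⟩ := s.exists_max_image h hs
    rcases le_or_gt (h b) 0 with h0 | h0
    · exact Or.inl ((Finset.fold_max_le 0).2 ⟨le_rfl, fun x hx => (hmax x hx).trans h0⟩)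
    · exact Or.inr ⟨b, hb, (Finset.fold_max_le (h b)).2 ⟨h0.le, hmax⟩⟩

lemma Fit_chain (hw : ∀ b i, w b i ∈ Set.Icc (0:ℝ) 1)
    (hp : ∀ b i, 0 ≤ p b i ∧ p b i + w b i ≤ 1) :
    ∀ n c, ∃ l : List V,
      Fit w p k idx u n c ≤ (l.map (fun b => u (w b k))).sum ∧
      (l.map (fun b => w b k)).sum ≤ p c k := by
  classical
  intro n
  induction n with
  | zero => intro c; exact ⟨[], by simp [Fit], by simpa using (hp c k).1⟩
  | succ n ih =>
    intro c
    rcases fold_max_cases (Finset.univ.filter (fun b => Pred w p k idx b c))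
        (fun b => Fit w p k idx u n b + u (w b k)) with h0 | ⟨b, hb, hle⟩
    · exact ⟨[], by simpa [Fit] using h0, by simpa using (hp c k).1⟩
    · have hbc : Pred w p k idx b c := (Finset.mem_filter.1 hb).2
      obtain ⟨l, hl1, hl2⟩ := ih b
      refine ⟨l ++ [b], ?_, ?_⟩
      · have : Fit w p k idx u (n+1) c ≤ Fit w p k idx u n b + u (w b k) := by
          simpa [Fit] using hle
        simp only [List.map_append, List.sum_append, List.map_cons, List.map_nil,
          List.sum_cons, List.sum_nil]
        linarith
      · simp only [List.map_append, List.sum_append, List.map_cons, List.map_nil,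
          List.sum_cons, List.sum_nil]
        have := hbc.2.1
        linarith

lemma dff_list {u : ℝ → ℝ} (hu : DualFeasible u) (l : List ℝ)
    (h1 : ∀ x ∈ l, x ∈ Set.Icc (0:ℝ) 1) (h2 : l.sum ≤ 1) : (l.map u).sum ≤ 1 := by
  have e1 : l.sum = ∑ j, l.get j := by
    rw [← List.sum_ofFn, List.ofFn_get]
  have e2 : (l.map u).sum = ∑ j, u (l.get j) := by
    conv_lhs => rw [← List.ofFn_get l, List.map_ofFn, List.sum_ofFn]
    rfl
  rw [e2]
  exact hu.2 l.length l.get (fun j => h1 _ (l.get_mem j)) (e1 ▸ h2)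

lemma Fit_add_le_one (hw : ∀ b i, w b i ∈ Set.Icc (0:ℝ) 1)
    (hp : ∀ b i, 0 ≤ p b i ∧ p b i + w b i ≤ 1) {u : ℝ → ℝ} (hu : DualFeasible u)
    (n : ℕ) (c : V) : Fit w p k idx u n c + u (w c k) ≤ 1 := by
  obtain ⟨l, h1, h2⟩ := Fit_chain w p k idx u hw hp n c
  have key := dff_list hu (l.map (fun b => w b k) ++ [w c k]) ?_ ?_
  · have : ((l.map (fun b => w b k) ++ [w c k]).map u).sum
        = (l.map (fun b => u (w b k))).sum + u (w c k) := by
      simp [List.map_map, Function.comp_def]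
    rw [this] at key
    linarith
  · intro x hx
    rcases List.mem_append.1 hx with hx | hx
    · obtain ⟨b, _, rfl⟩ := List.mem_map.1 hx
      exact hw b k
    · simp only [List.mem_singleton] at hx
      exact hx ▸ hw c k
  · simp only [List.sum_append, List.sum_cons, List.sum_nil]
    have := (hp c k).2
    linarith

end FitLemmas

/-- Repacking lemma: applying a dual feasible function to one coordinate preserves
packability. -/
lemma repack {V : Type*} {d : ℕ} [Fintype V] (w p : V → Fin d → ℝ)
    (hw : ∀ b i, w b i ∈ Set.Icc (0:ℝ) 1) (hp : IsOrthogonalPacking w p)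
    (k : Fin d) (u : ℝ → ℝ) (hu : DualFeasible u) :
    ∃ p', IsOrthogonalPacking (fun b i => if i = k then u (w b i) else w b i) p' := by
  classical
  set idx : V → ℕ := fun b => ((Fintype.equivFin V) b : ℕ) with hidx
  have hidx_inj : Function.Injective idx := by
    intro a b h
    exact (Fintype.equivFin V).injective (Fin.val_injective h)
  set g : V → ℝ ×ₗ (ℝ ×ₗ ℕ) :=
    fun b => toLex (p b k + w b k, toLex (p b k, idx b)) with hg
  have hPg : ∀ b c, Pred w p k idx b c → g b < g c := by
    rintro b c ⟨hov, hsep, halt⟩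
    have hwc := (hw c k).1
    have hwb := (hw b k).1
    show (toLex (p b k + w b k, toLex (p b k, idx b)) : ℝ ×ₗ (ℝ ×ₗ ℕ)) <
      toLex (p c k + w c k, toLex (p c k, idx c))
    rw [Prod.Lex.lt_iff]
    rcases lt_or_eq_of_le (show p b k + w b k ≤ p c k + w c k by linarith) with h | h
    · exact Or.inl h
    · refine Or.inr ⟨h, ?_⟩
      rw [Prod.Lex.lt_iff]
      have hwc0 : w c k = 0 := by linarith
      have hpc : p c k = p b k + w b k := by linarith
      rcases lt_or_eq_of_le (show p b k ≤ p c k by linarith) with h' | h'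
      · exact Or.inl h'
      · refine Or.inr ⟨h', ?_⟩
        have hsep' : p c k + w c k ≤ p b k := by linarith
        rcases halt with hh | hh
        · exact absurd hsep' hh
        · exact hh
  have hPm : ∀ b c, Pred w p k idx b c →
      (Finset.univ.filter (fun b' => g b' < g b)).card <
      (Finset.univ.filter (fun b' => g b' < g c)).card := by
    intro b c h
    apply Finset.card_lt_card
    have hsub : (Finset.univ.filter (fun b' => g b' < g b)) ⊆
        (Finset.univ.filter (fun b' => g b' < g c)) := by
      intro x hx
      simp only [Finset.mem_filter, Finset.mem_univ, true_and] at hx ⊢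
      exact lt_trans hx (hPg b c h)
    refine (Finset.ssubset_iff_of_subset hsub).2 ⟨b, ?_, ?_⟩
    · simp only [Finset.mem_filter, Finset.mem_univ, true_and]
      exact hPg b c h
    · simp only [Finset.mem_filter, Finset.mem_univ, true_and]
      exact lt_irrefl _
  set m : V → ℕ := fun c => (Finset.univ.filter (fun b' => g b' < g c)).card with hm
  set q : V → ℝ := fun c => Fit w p k idx u (m c) c with hq
  have main : ∀ b c, Pred w p k idx b c → q b + u (w b k) ≤ q c := by
    intro b c h
    calc q b + u (w b k) ≤ Fit w p k idx u (m b + 1) c :=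
          Fit_pred_le w p k idx u h (m b)
      _ ≤ Fit w p k idx u (m c) c := Fit_mono w p k idx u (hPm b c h) c
  refine ⟨fun b i => if i = k then q b else p b i, ?_, ?_⟩
  · intro b i
    by_cases hik : i = k
    · simp only [hik, if_pos rfl]
      exact ⟨Fit_nonneg w p k idx u (m b) b,
        Fit_add_le_one w p k idx hw hp.1 hu (m b) b⟩
    · simp only [if_neg hik]
      exact hp.1 b i
  · intro b c hbc
    by_cases hex : ∃ i, i ≠ k ∧ (p b i + w b i ≤ p c i ∨ p c i + w c i ≤ p b i)
    · obtain ⟨i, hik, hsep⟩ := hex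
      exact ⟨i, by simpa only [if_neg hik] using hsep⟩
    · have hov : ∀ i, i ≠ k → ¬(p b i + w b i ≤ p c i ∨ p c i + w c i ≤ p b i) :=
        fun i hi hs => hex ⟨i, hi, hs⟩
      have hov' : ∀ i, i ≠ k → ¬(p c i + w c i ≤ p b i ∨ p b i + w b i ≤ p c i) :=
        fun i hi hs => hex ⟨i, hi, hs.symm⟩
      obtain ⟨i0, hsep0⟩ := hp.2 b c hbc
      have hik : i0 = k := by
        by_contra h
        exact hov i0 h hsep0
      rw [hik] at hsep0
      have hidxne : idx b ≠ idx c := fun h => hbc (hidx_inj h)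
      have goal_bc : Pred w p k idx b c → ∃ i,
          ((if i = k then q b else p b i) + (if i = k then u (w b i) else w b i)
            ≤ (if i = k then q c else p c i)) ∨
          ((if i = k then q c else p c i) + (if i = k then u (w c i) else w c i)
            ≤ (if i = k then q b else p b i)) := by
        intro h
        exact ⟨k, Or.inl (by simpa only [if_pos rfl, if_pos trivial] using main b c h)⟩
      have goal_cb : Pred w p k idx c b → ∃ i,
          ((if i = k then q b else p b i) + (if i = k then u (w b i) else w b i)
            ≤ (if i = k then q c else p c i)) ∨
          ((if i = k then q c else p c i) + (if i = k then u (w c i) else w c i)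
            ≤ (if i = k then q b else p b i)) := by
        intro h
        exact ⟨k, Or.inr (by simpa only [if_pos rfl, if_pos trivial] using main c b h)⟩
      rcases hsep0 with hbcs | hcbs
      · by_cases hcb : p c k + w c k ≤ p b k
        · rcases Nat.lt_or_ge (idx b) (idx c) with hlt | hge
          · exact goal_bc ⟨hov, hbcs, Or.inr hlt⟩
          · have hlt : idx c < idx b := lt_of_le_of_ne hge (Ne.symm hidxne)
            exact goal_cb ⟨hov', hcb, Or.inr hlt⟩
        · exact goal_bc ⟨hov, hbcs, Or.inl hcb⟩
      · by_cases hbcsep : p b k + w b k ≤ p c k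
        · rcases Nat.lt_or_ge (idx b) (idx c) with hlt | hge
          · exact goal_bc ⟨hov, hbcsep, Or.inr hlt⟩
          · have hlt : idx c < idx b := lt_of_le_of_ne hge (Ne.symm hidxne)
            exact goal_cb ⟨hov', hcbs, Or.inr hlt⟩
        · exact goal_cb ⟨hov', hcbs, Or.inl hbcsep⟩

/-- Any family of boxes packed in the unit cube has total volume at most 1. -/
lemma packing_volume_le_one {V : Type*} [Fintype V] {d : ℕ} (w p : V → Fin d → ℝ)
    (hw : ∀ b i, 0 ≤ w b i) (hp : IsOrthogonalPacking w p) :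
    ∑ b, ∏ i, w b i ≤ 1 := by
  classical
  set S : V → Set (Fin d → ℝ) :=
    fun b => Set.univ.pi fun i => Set.Ioo (p b i) (p b i + w b i) with hS
  have hmeas : ∀ b, MeasurableSet (S b) :=
    fun b => MeasurableSet.univ_pi fun i => measurableSet_Ioo
  have hdisj : Pairwise (Function.onFun Disjoint S) := by
    intro b c hbc
    obtain ⟨i, hi⟩ := hp.2 b c hbc
    refine Set.disjoint_left.2 fun x hxb hxc => ?_
    have h1 := hxb i (Set.mem_univ i)
    have h2 := hxc i (Set.mem_univ i)
    simp only [Set.mem_Ioo] at h1 h2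
    rcases hi with h | h
    · linarith [h1.2, h2.1]
    · linarith [h2.2, h1.1]
  have hsub : ∀ b, S b ⊆ Set.univ.pi fun _ => Set.Icc (0:ℝ) 1 := by
    intro b x hx i _
    have hxi := hx i (Set.mem_univ i)
    simp only [Set.mem_Ioo] at hxi
    have h1 := (hp.1 b i).1
    have h2 := (hp.1 b i).2
    exact ⟨by linarith [hxi.1], by linarith [hxi.2]⟩
  have hvol : ∀ b, MeasureTheory.volume (S b) = ENNReal.ofReal (∏ i, w b i) := by
    intro b
    rw [hS]
    rw [MeasureTheory.volume_pi_pi, ENNReal.ofReal_prod_of_nonneg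
      (fun i _ => hw b i)]
    refine Finset.prod_congr rfl fun i _ => ?_
    rw [Real.volume_Ioo]
    ring_nf
  have hcube : MeasureTheory.volume
      (Set.univ.pi fun _ : Fin d => Set.Icc (0:ℝ) 1) = 1 := by
    rw [MeasureTheory.volume_pi_pi]
    simp [Real.volume_Icc]
  have key : ∑ b, ENNReal.ofReal (∏ i, w b i) ≤ 1 := by
    calc ∑ b, ENNReal.ofReal (∏ i, w b i) = ∑ b, MeasureTheory.volume (S b) := by
          exact Finset.sum_congr rfl fun b _ => (hvol b).symm
      _ = ∑' b, MeasureTheory.volume (S b) := (tsum_fintype _).symm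
      _ = MeasureTheory.volume (⋃ b, S b) :=
          (MeasureTheory.measure_iUnion hdisj hmeas).symm
      _ ≤ MeasureTheory.volume (Set.univ.pi fun _ : Fin d => Set.Icc (0:ℝ) 1) :=
          MeasureTheory.measure_mono (Set.iUnion_subset hsub)
      _ = 1 := hcube
  have heq : ENNReal.ofReal (∑ b, ∏ i, w b i) = ∑ b, ENNReal.ofReal (∏ i, w b i) :=
    ENNReal.ofReal_sum_of_nonneg
      (fun b _ => Finset.prod_nonneg fun i _ => hw b i)
  rw [← heq] at key
  exact ENNReal.ofReal_le_one.1 key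

end TVAux

/-- If the boxes `(V,w)` admit an orthogonal packing into the unit cube and
`u₁, …, u_d` are dual feasible functions, then the transformed total volume
satisfies `∑_{b ∈ V} ∏ᵢ uᵢ(wᵢ(b)) ≤ 1`. -/
theorem transformedVolume_le_one {V : Type*} [Fintype V] {d : ℕ}
    (w : V → Fin d → ℝ) (hw : ∀ b i, w b i ∈ Set.Icc (0 : ℝ) 1)
    (hpack : ∃ p : V → Fin d → ℝ, IsOrthogonalPacking w p)
    (u : Fin d → ℝ → ℝ) (hu : ∀ i, DualFeasible (u i)) :
    ∑ b, ∏ i, u i (w b i) ≤ 1 := by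
  classical
  have step : ∀ s : Finset (Fin d),
      ∃ p', IsOrthogonalPacking (fun b i => if i ∈ s then u i (w b i) else w b i) p' := by
    intro s
    induction s using Finset.induction_on with
    | empty => simpa using hpack
    | @insert k s hk ih =>
      obtain ⟨p', hp'⟩ := ih
      have hw' : ∀ b i, (if i ∈ s then u i (w b i) else w b i) ∈ Set.Icc (0:ℝ) 1 := by
        intro b i
        by_cases his : i ∈ s
        · simpa [his] using (hu i).1 _ (hw b i)
        · simpa [his] using hw b i
      obtain ⟨p'', hp''⟩ := TVAux.repack _ p' hw' hp' k (u k) (hu k)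
      refine ⟨p'', ?_⟩
      have heq : (fun b i => if i ∈ insert k s then u i (w b i) else w b i)
          = (fun b i => if i = k then u k (if i ∈ s then u i (w b i) else w b i)
              else if i ∈ s then u i (w b i) else w b i) := by
        funext b i
        by_cases hik : i = k
        · simp [hik, hk]
        · by_cases his : i ∈ s <;> simp [hik, his, Finset.mem_insert]
      rw [heq]
      exact hp''
  obtain ⟨p, hp⟩ := step Finset.univ
  have heq : (fun b i => if i ∈ (Finset.univ : Finset (Fin d)) then u i (w b i) else w b i)
      = fun b i => u i (w b i) := by
    funext b i; simp
  rw [heq] at hp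
  exact TVAux.packing_volume_le_one _ p
    (fun b i => ((hu i).1 _ (hw b i)).1) hp
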